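/- Let H³_k ∈ ℂ (k ∈ {−2, 0} ∪ {1, 2, …}) and H^j_k ∈ ℂ (j ≥ 5, k ∈ {−4, −2, 0} ∪ {1, 2, …}), and consider the Σ₅ family p₃ = z³ + H³₋₂ z² + H³₀ + ∑_{k≥1} H³_k z^{−k} and p_j = z^j + H^j_{−4} z⁴ + H^j_{−2} z² + H^j_0 + ∑_{k≥1} H^j_k z^{−k} for j ≥ 5. Then the family {p₃, p₅, p₆, p₇, …} is multiplicatively closed and z² p lies in its ℂ-linear span for every member p if and only if: H^j_k = 0 for all k ≥ 1 and all j in {3, 5, 6, 7, …} (so every member is a polynomial in z); H⁵₋₄ = H³₋₂, H⁵₋₂ = H³₀, H⁵₀ = 0; H⁶₋₄ = −(H³₋₂)², H⁶₋₂ = −2H³₀H³₋₂, H⁶₀ = −(H³₀)²; and for all j ≥ 5 the recursions H^{j+2}_{−4} = H^j_{−2} + (H³₋₂)² H^j_{−4}, H^{j+2}_{−2} = H^j_0 + 2H³₀H³₋₂ H^j_{−4}, H^{j+2}_0 = (H³₀)² H^j_{−4} hold. -/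

import Mathlib

noncomputable section

/-- `z^j` viewed as a formal Laurent series in `t = z⁻¹` (so `z^j = t^(-j)`). -/
def zp (j : ℤ) : LaurentSeries ℂ := HahnSeries.single (-j) 1

/-- The element `p₃ = z³ + H³₋₂ z² + H³₀ + ∑_{k ≥ 1} H³_k z^(-k)` of the `Σ₅` family. -/
def sigma5three (H : ℕ → ℤ → ℂ) : LaurentSeries ℂ :=
  zp 3 + H 3 (-2) • zp 2
    + HahnSeries.ofPowerSeries ℤ ℂ (PowerSeries.mk fun k => H 3 (k:ℤ))

/-- The elements `p_j = z^j + H^j_{-4} z⁴ + H^j_{-2} z² + H^j_0 + ∑_{k ≥ 1} H^j_k z^(-k)`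
(`j ≥ 5`) of the `Σ₅` family. -/
def sigma5 (H : ℕ → ℤ → ℂ) (j : ℕ) : LaurentSeries ℂ :=
  zp j + H j (-4) • zp 4 + H j (-2) • zp 2
    + HahnSeries.ofPowerSeries ℤ ℂ (PowerSeries.mk fun k => H j (k:ℤ))

/-- The `Σ₅` family `{p₃, p₅, p₆, p₇, …}` as a set of Laurent series. -/
def sigma5Set (H : ℕ → ℤ → ℂ) : Set (LaurentSeries ℂ) :=
  insert (sigma5three H) (sigma5 H '' {j | 5 ≤ j})

namespace Sigma5Aux

lemma single_mul_coeff (e : ℤ) (c : ℂ) (x : LaurentSeries ℂ) (n : ℤ) :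
    (HahnSeries.single e c * x).coeff n = c * x.coeff (n - e) := by
  have : (HahnSeries.single e c * x).coeff (n - e + e) = c * x.coeff (n - e) := HahnSeries.coeff_single_mul_add
  rwa [sub_add_cancel] at this

lemma ofps_coeff (f : ℕ → ℂ) (n : ℤ) :
    (HahnSeries.ofPowerSeries ℤ ℂ (PowerSeries.mk f)).coeff n
      = if 0 ≤ n then f n.toNat else 0 := by
  split
  · next h =>
    conv_lhs => rw [show n = ((n.toNat : ℕ) : ℤ) by omega]
    rw [HahnSeries.ofPowerSeries_apply_coeff, PowerSeries.coeff_mk]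
  · next h =>
    rw [HahnSeries.ofPowerSeries_apply, HahnSeries.embDomain_of_notMem_range]
    intro hm
    obtain ⟨m, hm⟩ := hm
    simp only [Nat.castOrderEmbedding_apply] at hm
    omega

lemma ofps_coeff_neg (x : PowerSeries ℂ) {n : ℤ} (h : n < 0) :
    (HahnSeries.ofPowerSeries ℤ ℂ x).coeff n = 0 := by
  rw [HahnSeries.ofPowerSeries_apply, HahnSeries.embDomain_of_notMem_range]
  intro hm
  obtain ⟨m, hm⟩ := hm
  simp only [Nat.castOrderEmbedding_apply] at hm
  omega

lemma ofps_coeff_nat (x : PowerSeries ℂ) (k : ℕ) :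
    (HahnSeries.ofPowerSeries ℤ ℂ x).coeff (k : ℤ) = PowerSeries.coeff k x :=
  HahnSeries.ofPowerSeries_apply_coeff x k

lemma smul_single (c : ℂ) (e : ℤ) (r : ℂ) :
    c • HahnSeries.single e r = HahnSeries.single e (c * r) := by
  ext n
  rw [HahnSeries.coeff_smul]
  simp only [HahnSeries.coeff_single]
  split <;> simp

variable (H : ℕ → ℤ → ℂ)

lemma coeff_three (n : ℤ) :
    (sigma5three H).coeff n = (if n = -3 then 1 else 0) + (if n = -2 then H 3 (-2) else 0)
      + (if 0 ≤ n then H 3 n.toNat else 0) := by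
  simp only [sigma5three, zp, HahnSeries.coeff_add, HahnSeries.coeff_smul,
    HahnSeries.coeff_single, ofps_coeff, smul_eq_mul]
  norm_num

lemma coeff_sigma (j : ℕ) (n : ℤ) :
    (sigma5 H j).coeff n = (if n = -(j:ℤ) then 1 else 0) + (if n = -4 then H j (-4) else 0)
      + (if n = -2 then H j (-2) else 0) + (if 0 ≤ n then H j n.toNat else 0) := by
  simp only [sigma5, zp, HahnSeries.coeff_add, HahnSeries.coeff_smul,
    HahnSeries.coeff_single, ofps_coeff, smul_eq_mul]
  norm_num

end Sigma5Aux

namespace Sigma5Aux2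
open Sigma5Aux
variable (H : ℕ → ℤ → ℂ)

lemma coeff_three_negnat (j : ℕ) (hj : 5 ≤ j) : (sigma5three H).coeff (-(j:ℤ)) = 0 := by
  rw [coeff_three]
  have h1 : ¬ (-(j:ℤ) = -3) := by omega
  have h2 : ¬ (-(j:ℤ) = -2) := by omega
  have h3 : ¬ ((0:ℤ) ≤ -(j:ℤ)) := by omega
  simp [h1, h2, h3]
  intro h; omega

lemma coeff_sigma_negnat (i j : ℕ) (hi : 5 ≤ i) (hj : 5 ≤ j) :
    (sigma5 H i).coeff (-(j:ℤ)) = if j = i then 1 else 0 := by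
  rw [coeff_sigma]
  have h2 : ¬ (-(j:ℤ) = -4) := by omega
  have h3 : ¬ (-(j:ℤ) = -2) := by omega
  have h4 : ¬ ((0:ℤ) ≤ -(j:ℤ)) := by omega
  have h5 : (-(j:ℤ) = -(i:ℤ)) ↔ (j = i) := by omega
  simp [h2, h3, h4, h5]
  intro h; omega

/-- The linear functional that tests membership in the span. -/
def Phi (n : ℤ) (f : LaurentSeries ℂ) : ℂ :=
  f.coeff n - (sigma5three H).coeff n * f.coeff (-3)
    - ∑ᶠ j : ℕ, if 5 ≤ j then (sigma5 H j).coeff n * f.coeff (-(j:ℤ)) else 0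

lemma supp_fin (g : ℕ → ℂ) (f : LaurentSeries ℂ) :
    (Function.support fun j : ℕ => if 5 ≤ j then g j * f.coeff (-(j:ℤ)) else 0).Finite := by
  rcases eq_or_ne f 0 with rfl | hf
  · have : (fun j : ℕ => if 5 ≤ j then g j * (0 : LaurentSeries ℂ).coeff (-(j:ℤ)) else 0)
        = fun _ => 0 := funext fun j => by split <;> simp
    rw [this]
    simp
  · apply (Set.finite_Iic (-f.order).toNat).subset
    intro j hj
    simp only [Function.mem_support] at hj
    have hne : f.coeff (-(j:ℤ)) ≠ 0 := by
      intro h0; apply hj; split <;> simp [h0]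
    have : ¬ (-(j:ℤ) < f.order) := fun hlt => hne (HahnSeries.coeff_eq_zero_of_lt_order hlt)
    simp only [Set.mem_Iic]
    omega

lemma phi_span (f : LaurentSeries ℂ) (hf : f ∈ Submodule.span ℂ (sigma5Set H)) (n : ℤ) :
    Phi H n f = 0 := by
  induction hf using Submodule.span_induction with
  | mem x hx =>
    rcases hx with hx | ⟨i, hi, rfl⟩
    · subst hx
      rw [Phi]
      have h1 : (sigma5three H).coeff (-3 : ℤ) = 1 := by rw [coeff_three]; norm_num
      rw [h1, mul_one, sub_self, finsum_congr (g := fun _ => (0:ℂ)), finsum_zero, sub_zero]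
      intro j
      split
      · rw [coeff_three_negnat H j ‹_›, mul_zero]
      · rfl
    · simp only [Set.mem_setOf_eq] at hi
      rw [Phi]
      have h1 : (sigma5 H i).coeff (-3 : ℤ) = 0 := by
        rw [coeff_sigma]
        have : ¬ ((-3 : ℤ) = -(i:ℤ)) := by omega
        simp [this]
      rw [h1, mul_zero, sub_zero]
      rw [finsum_eq_single _ i]
      · have h2 : (sigma5 H i).coeff (-(i:ℤ)) = 1 := by
          rw [coeff_sigma_negnat H i i hi hi]; simp
        rw [if_pos hi, h2, mul_one, sub_self]
      · intro j hji
        split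
        · rw [coeff_sigma_negnat H i j hi ‹_›, if_neg hji, mul_zero]
        · rfl
  | zero =>
    rw [Phi]
    have : (fun j : ℕ => if 5 ≤ j then (sigma5 H j).coeff n * (0 : LaurentSeries ℂ).coeff (-(j:ℤ)) else 0)
        = fun _ => 0 := funext fun j => by split <;> simp
    rw [this]
    simp
  | add x y hx hy ihx ihy =>
    have hxf := supp_fin (fun j => (sigma5 H j).coeff n) x
    have hyf := supp_fin (fun j => (sigma5 H j).coeff n) y
    rw [Phi] at ihx ihy ⊢
    have key : ∑ᶠ j : ℕ, (if 5 ≤ j then (sigma5 H j).coeff n * (x + y).coeff (-(j:ℤ)) else 0)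
        = (∑ᶠ j : ℕ, if 5 ≤ j then (sigma5 H j).coeff n * x.coeff (-(j:ℤ)) else 0)
          + ∑ᶠ j : ℕ, if 5 ≤ j then (sigma5 H j).coeff n * y.coeff (-(j:ℤ)) else 0 := by
      rw [← finsum_add_distrib hxf hyf]
      apply finsum_congr
      intro j
      split <;> simp [HahnSeries.coeff_add] <;> ring
    rw [key, HahnSeries.coeff_add, HahnSeries.coeff_add]
    linear_combination ihx + ihy
  | smul c x hx ihx =>
    have hxf := supp_fin (fun j => (sigma5 H j).coeff n) x
    rw [Phi] at ihx ⊢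
    have key : ∑ᶠ j : ℕ, (if 5 ≤ j then (sigma5 H j).coeff n * (c • x).coeff (-(j:ℤ)) else 0)
        = c * ∑ᶠ j : ℕ, (if 5 ≤ j then (sigma5 H j).coeff n * x.coeff (-(j:ℤ)) else 0) := by
      rw [mul_finsum _ c]
      apply finsum_congr
      intro j
      split <;> simp [HahnSeries.coeff_smul] <;> ring
    rw [key, HahnSeries.coeff_smul, HahnSeries.coeff_smul, smul_eq_mul, smul_eq_mul]
    linear_combination c * ihx
end Sigma5Aux2

namespace Sigma5Fwd
open Sigma5Aux Sigma5Aux2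

variable (H : ℕ → ℤ → ℂ)

lemma mul_single_coeff (e : ℤ) (c : ℂ) (x : LaurentSeries ℂ) (n : ℤ) :
    (x * HahnSeries.single e c).coeff n = c * x.coeff (n - e) := by
  have : (x * HahnSeries.single e c).coeff (n - e + e) = x.coeff (n - e) * c := HahnSeries.coeff_mul_single_add
  rw [sub_add_cancel] at this
  rw [this, mul_comm]

lemma zp_mul_coeff (j : ℤ) (x : LaurentSeries ℂ) (n : ℤ) :
    (zp j * x).coeff n = x.coeff (n + j) := by
  rw [zp, single_mul_coeff, one_mul, sub_neg_eq_add]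

lemma hS3split : sigma5three H = HahnSeries.single (-3) 1
    + HahnSeries.single (-2) (H 3 (-2))
    + HahnSeries.ofPowerSeries ℤ ℂ (PowerSeries.mk fun k => H 3 (k:ℤ)) := by
  rw [sigma5three, zp, zp, smul_single, mul_one]

lemma mul33_coeff (n : ℤ) :
    (sigma5three H * sigma5three H).coeff n
      = (if n = -6 then 1 else 0) + 2*(H 3 (-2))*(if n = -5 then 1 else 0)
        + (H 3 (-2))^2*(if n = -4 then 1 else 0)
        + 2*((HahnSeries.ofPowerSeries ℤ ℂ (PowerSeries.mk fun k => H 3 (k:ℤ))).coeff (n+3))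
        + 2*(H 3 (-2))*((HahnSeries.ofPowerSeries ℤ ℂ (PowerSeries.mk fun k => H 3 (k:ℤ))).coeff (n+2))
        + ((HahnSeries.ofPowerSeries ℤ ℂ (PowerSeries.mk fun k => H 3 (k:ℤ))
            * HahnSeries.ofPowerSeries ℤ ℂ (PowerSeries.mk fun k => H 3 (k:ℤ))).coeff n) := by
  set W := HahnSeries.ofPowerSeries ℤ ℂ (PowerSeries.mk fun k => H 3 (k:ℤ)) with hW
  set x := HahnSeries.single (-3 : ℤ) (1:ℂ)
  set y := HahnSeries.single (-2 : ℤ) (H 3 (-2))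
  have e1 : sigma5three H * sigma5three H
      = x*x + x*y + y*x + y*y + x*W + W*x + y*W + W*y + W*W := by
    rw [hS3split]; ring
  rw [e1]
  simp only [HahnSeries.coeff_add, x, y, HahnSeries.single_mul_single,
    single_mul_coeff, mul_single_coeff, HahnSeries.coeff_single]
  norm_num
  split_ifs <;> ring_nf

/-- two-point finsum helper -/
lemma finsum_two (F : ℕ → ℂ) (i₁ i₂ : ℕ) (hne : i₁ ≠ i₂)
    (h : ∀ j, j ≠ i₁ → j ≠ i₂ → F j = 0) :
    ∑ᶠ j : ℕ, F j = F i₁ + F i₂ := by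
  have hdec : ∀ j, F j = (if j = i₁ then F i₁ else 0) + (if j = i₂ then F i₂ else 0) := by
    intro j
    by_cases h1 : j = i₁
    · subst h1; simp [hne]
    · by_cases h2 : j = i₂
      · subst h2; simp [h1]
      · simp [h1, h2, h j h1 h2]
  rw [finsum_congr hdec]
  rw [finsum_add_distrib]
  · rw [finsum_eq_single _ i₁ (by intro x hx; simp [hx]),
      finsum_eq_single _ i₂ (by intro x hx; simp [hx])]
    simp [hne]
  · exact Set.Finite.subset (Set.finite_singleton i₁)
      (by intro x hx; simp only [Function.mem_support] at hx; by_contra h'; simp at h'; simp [h'] at hx)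
  · exact Set.Finite.subset (Set.finite_singleton i₂)
      (by intro x hx; simp only [Function.mem_support] at hx; by_contra h'; simp at h'; simp [h'] at hx)

variable {H : ℕ → ℤ → ℂ}

lemma E1 (h : zp 2 * sigma5three H ∈ Submodule.span ℂ (sigma5Set H)) (n : ℤ) :
    (sigma5three H).coeff (n + 2) = (sigma5 H 5).coeff n := by
  have hp := phi_span H _ h n
  rw [Phi, zp_mul_coeff, zp_mul_coeff] at hp
  have hm3 : (sigma5three H).coeff (-3 + 2) = 0 := by
    rw [coeff_three]; norm_num
  rw [hm3, mul_zero, sub_zero] at hp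
  have hsum : ∑ᶠ j : ℕ, (if 5 ≤ j then (sigma5 H j).coeff n * (zp 2 * sigma5three H).coeff (-(j:ℤ)) else 0)
      = (sigma5 H 5).coeff n := by
    rw [finsum_eq_single _ 5]
    · rw [if_pos (le_refl 5), zp_mul_coeff]
      have : (sigma5three H).coeff (-(5:ℕ) + 2) = 1 := by
        rw [coeff_three]; norm_num
      rw [this, mul_one]
    · intro j hj
      split
      · rw [zp_mul_coeff]
        have : (sigma5three H).coeff (-(j:ℤ) + 2) = 0 := by
          rw [coeff_three]
          have h1 : ¬ (-(j:ℤ) + 2 = -3) := by omega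
          have h2 : ¬ (-(j:ℤ) + 2 = -2) := by omega
          have h3 : ¬ ((0:ℤ) ≤ -(j:ℤ) + 2) := by omega
          simp [h1, h2, h3]
        rw [this, mul_zero]
      · rfl
  rw [hsum] at hp
  linear_combination hp

lemma coeffm1 {f : LaurentSeries ℂ} (hf : f ∈ Submodule.span ℂ (sigma5Set H)) :
    f.coeff (-1) = 0 := by
  induction hf using Submodule.span_induction with
  | mem x hx =>
    rcases hx with hx | ⟨i, hi, rfl⟩
    · subst hx; rw [coeff_three]; norm_num
    · simp only [Set.mem_setOf_eq] at hi
      rw [coeff_sigma]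
      have h1 : ¬ ((-1:ℤ) = -(i:ℤ)) := by omega
      simp [h1]
  | zero => simp
  | add x y hx hy ihx ihy => rw [HahnSeries.coeff_add, ihx, ihy, add_zero]
  | smul c x hx ihx => rw [HahnSeries.coeff_smul, ihx, smul_zero]

lemma E2 {j : ℕ} (hj : 5 ≤ j)
    (h : zp 2 * sigma5 H j ∈ Submodule.span ℂ (sigma5Set H)) (n : ℤ) :
    (sigma5 H j).coeff (n + 2)
      = (sigma5 H (j+2)).coeff n + H j (-4) * (sigma5 H 6).coeff n := by
  have hp := phi_span H _ h n
  rw [Phi, zp_mul_coeff, zp_mul_coeff] at hp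
  have hm3 : (sigma5 H j).coeff (-3 + 2) = 0 := by
    rw [coeff_sigma]
    have h1 : ¬ ((-3 + 2 :ℤ) = -(j:ℤ)) := by omega
    norm_num [h1]
    omega
  rw [hm3, mul_zero, sub_zero] at hp
  have hsum : ∑ᶠ i : ℕ, (if 5 ≤ i then (sigma5 H i).coeff n * (zp 2 * sigma5 H j).coeff (-(i:ℤ)) else 0)
      = (sigma5 H (j+2)).coeff n + H j (-4) * (sigma5 H 6).coeff n := by
    rw [finsum_two _ (j+2) 6 (by omega)]
    · have c1 : (sigma5 H j).coeff (-((j+2:ℕ):ℤ) + 2) = 1 := by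
        rw [show (-((j+2:ℕ):ℤ) + 2) = -(j:ℤ) by push_cast; ring, coeff_sigma]
        have h2 : ¬ (-(j:ℤ) = -4) := by omega
        have h3 : ¬ (-(j:ℤ) = -2) := by omega
        have h4 : ¬ ((0:ℤ) ≤ -(j:ℤ)) := by omega
        simp [h2, h3, h4]
        intro h; omega
      have c2 : (sigma5 H j).coeff (-((6:ℕ):ℤ) + 2) = H j (-4) := by
        rw [coeff_sigma]
        have h1 : ¬ ((-4:ℤ) = -(j:ℤ)) := by omega
        norm_num [h1]
      rw [if_pos (by omega), if_pos (by norm_num), zp_mul_coeff, zp_mul_coeff, c1, c2]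
      ring
    · intro i hi1 hi2
      split
      · next hi5 =>
        rw [zp_mul_coeff]
        have : (sigma5 H j).coeff (-(i:ℤ) + 2) = 0 := by
          rw [coeff_sigma]
          have h1 : ¬ (-(i:ℤ) + 2 = -(j:ℤ)) := by
            intro hh
            apply hi1
            omega
          have h2 : ¬ (-(i:ℤ) + 2 = -4) := by
            intro hh
            apply hi2
            omega
          have h3 : ¬ (-(i:ℤ) + 2 = -2) := by omega
          have h4 : ¬ ((0:ℤ) ≤ -(i:ℤ) + 2) := by omega
          simp [h1, h2, h3, h4]
        rw [this, mul_zero]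
      · rfl
  rw [hsum] at hp
  linear_combination hp

lemma E3 (h : sigma5three H * sigma5three H ∈ Submodule.span ℂ (sigma5Set H)) (n : ℤ) :
    (sigma5three H * sigma5three H).coeff n
      = 2 * H 3 0 * (sigma5three H).coeff n + 2 * H 3 (-2) * (sigma5 H 5).coeff n
        + (sigma5 H 6).coeff n := by
  have hp := phi_span H _ h n
  rw [Phi] at hp
  have hm3 : (sigma5three H * sigma5three H).coeff (-3) = 2 * H 3 0 := by
    rw [mul33_coeff, ← map_mul, ofps_coeff_neg _ (by norm_num : (-3:ℤ) < 0)]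
    norm_num [ofps_coeff]
  have hmj : ∀ i : ℕ, 5 ≤ i → (sigma5three H * sigma5three H).coeff (-(i:ℤ))
      = (if i = 6 then 1 else 0) + 2 * H 3 (-2) * (if i = 5 then 1 else 0) := by
    intro i hi
    rw [mul33_coeff]
    have h1 : ( -(i:ℤ) = -6) ↔ i = 6 := by omega
    have h2 : ( -(i:ℤ) = -5) ↔ i = 5 := by omega
    have h3 : ¬ ( -(i:ℤ) = -4) := by omega
    have h4 : (HahnSeries.ofPowerSeries ℤ ℂ (PowerSeries.mk fun k => H 3 (k:ℤ))).coeff (-(i:ℤ)+3) = 0 := by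
      rw [ofps_coeff]; have : ¬ ((0:ℤ) ≤ -(i:ℤ)+3) := by omega
      simp [this]
    have h5 : (HahnSeries.ofPowerSeries ℤ ℂ (PowerSeries.mk fun k => H 3 (k:ℤ))).coeff (-(i:ℤ)+2) = 0 := by
      rw [ofps_coeff]; have : ¬ ((0:ℤ) ≤ -(i:ℤ)+2) := by omega
      simp [this]
    have h6 : (HahnSeries.ofPowerSeries ℤ ℂ (PowerSeries.mk fun k => H 3 (k:ℤ))
        * HahnSeries.ofPowerSeries ℤ ℂ (PowerSeries.mk fun k => H 3 (k:ℤ))).coeff (-(i:ℤ)) = 0 := by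
      rw [← map_mul, ofps_coeff_neg _ (by omega : -(i:ℤ) < 0)]
    rw [h4, h5, h6]
    simp only [h1, h2, h3, if_false]
    ring
  have hsum : ∑ᶠ i : ℕ, (if 5 ≤ i then (sigma5 H i).coeff n * (sigma5three H * sigma5three H).coeff (-(i:ℤ)) else 0)
      = 2 * H 3 (-2) * (sigma5 H 5).coeff n + (sigma5 H 6).coeff n := by
    rw [finsum_two _ 5 6 (by omega)]
    · rw [if_pos (by norm_num), if_pos (by norm_num), hmj 5 (by norm_num), hmj 6 (by norm_num)]
      norm_num
      ring
    · intro i hi1 hi2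
      split
      · next hi5 =>
        rw [hmj i hi5]
        simp [hi1, hi2]
      · rfl
  rw [hm3, hsum] at hp
  linear_combination hp

lemma coeff_three_nat (k : ℕ) : (sigma5three H).coeff (k:ℤ) = H 3 (k:ℤ) := by
  rw [coeff_three]
  have h1 : ¬((k:ℤ) = -3) := by omega
  have h2 : ¬((k:ℤ) = -2) := by omega
  simp [h1, h2]

lemma coeff_sigma_nat {j : ℕ} (hj : 5 ≤ j) (k : ℕ) : (sigma5 H j).coeff (k:ℤ) = H j (k:ℤ) := by
  rw [coeff_sigma]
  have h1 : ¬((k:ℤ) = -(j:ℤ)) := by omega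
  have h2 : ¬((k:ℤ) = -4) := by omega
  have h3 : ¬((k:ℤ) = -2) := by omega
  simp [h1, h2, h3]

lemma Wcoeff_nat (k : ℕ) :
    (HahnSeries.ofPowerSeries ℤ ℂ (PowerSeries.mk fun i => H 3 (i:ℤ))).coeff (k:ℤ) = H 3 (k:ℤ) := by
  rw [ofps_coeff]; simp

lemma Wcoeff_neg {n : ℤ} (hn : n < 0) :
    (HahnSeries.ofPowerSeries ℤ ℂ (PowerSeries.mk fun i => H 3 (i:ℤ))).coeff n = 0 :=
  ofps_coeff_neg _ hn

lemma WWcoeff_nat (k : ℕ) :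
    ((HahnSeries.ofPowerSeries ℤ ℂ (PowerSeries.mk fun i => H 3 (i:ℤ))
      * HahnSeries.ofPowerSeries ℤ ℂ (PowerSeries.mk fun i => H 3 (i:ℤ)))).coeff (k:ℤ)
    = ∑ p ∈ Finset.HasAntidiagonal.antidiagonal k, H 3 (p.1:ℤ) * H 3 (p.2:ℤ) := by
  rw [← map_mul, ofps_coeff_nat, PowerSeries.coeff_mul]
  simp [PowerSeries.coeff_mk]

lemma WWcoeff_neg {n : ℤ} (hn : n < 0) :
    ((HahnSeries.ofPowerSeries ℤ ℂ (PowerSeries.mk fun i => H 3 (i:ℤ))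
      * HahnSeries.ofPowerSeries ℤ ℂ (PowerSeries.mk fun i => H 3 (i:ℤ)))).coeff n = 0 := by
  rw [← map_mul, ofps_coeff_neg _ hn]

lemma coeff_sigma_neg4 {j : ℕ} (hj : 5 ≤ j) : (sigma5 H j).coeff (-4) = H j (-4) := by
  rw [coeff_sigma]
  have h1 : ¬ ((-4:ℤ) = -(j:ℤ)) := by omega
  norm_num [h1]

lemma coeff_sigma_neg2 {j : ℕ} (hj : 5 ≤ j) : (sigma5 H j).coeff (-2) = H j (-2) := by
  rw [coeff_sigma]
  have h1 : ¬ ((-2:ℤ) = -(j:ℤ)) := by omega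
  norm_num [h1]

lemma forward
    (hmul : ∀ x ∈ sigma5Set H, ∀ y ∈ sigma5Set H, x * y ∈ Submodule.span ℂ (sigma5Set H))
    (hz2 : ∀ x ∈ sigma5Set H, zp 2 * x ∈ Submodule.span ℂ (sigma5Set H)) :
    ((∀ k : ℕ, 1 ≤ k → H 3 (k:ℤ) = 0 ∧ ∀ j : ℕ, 5 ≤ j → H j (k:ℤ) = 0) ∧
     (H 5 (-4) = H 3 (-2) ∧ H 5 (-2) = H 3 0 ∧ H 5 0 = 0) ∧
     (H 6 (-4) = -(H 3 (-2))^2 ∧ H 6 (-2) = -(2 * H 3 0 * H 3 (-2)) ∧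
        H 6 0 = -(H 3 0)^2) ∧
     (∀ j : ℕ, 5 ≤ j →
        H (j+2) (-4) = H j (-2) + (H 3 (-2))^2 * H j (-4) ∧
        H (j+2) (-2) = H j 0 + 2 * H 3 0 * H 3 (-2) * H j (-4) ∧
        H (j+2) 0 = (H 3 0)^2 * H j (-4))) := by
  have m3 : sigma5three H ∈ sigma5Set H := Set.mem_insert _ _
  have mj : ∀ j, 5 ≤ j → sigma5 H j ∈ sigma5Set H := fun j hj =>
    Set.mem_insert_of_mem _ ⟨j, hj, rfl⟩
  have e1 := E1 (hz2 _ m3)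
  have e2 : ∀ j, 5 ≤ j → ∀ n, (sigma5 H j).coeff (n + 2)
      = (sigma5 H (j+2)).coeff n + H j (-4) * (sigma5 H 6).coeff n :=
    fun j hj => E2 hj (hz2 _ (mj j hj))
  have e3' : ∀ n : ℤ, (if n = -6 then (1:ℂ) else 0) + 2*(H 3 (-2))*(if n = -5 then 1 else 0)
        + (H 3 (-2))^2*(if n = -4 then 1 else 0)
        + 2*((HahnSeries.ofPowerSeries ℤ ℂ (PowerSeries.mk fun k => H 3 (k:ℤ))).coeff (n+3))
        + 2*(H 3 (-2))*((HahnSeries.ofPowerSeries ℤ ℂ (PowerSeries.mk fun k => H 3 (k:ℤ))).coeff (n+2))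
        + ((HahnSeries.ofPowerSeries ℤ ℂ (PowerSeries.mk fun k => H 3 (k:ℤ))
            * HahnSeries.ofPowerSeries ℤ ℂ (PowerSeries.mk fun k => H 3 (k:ℤ))).coeff n)
      = 2 * H 3 0 * (sigma5three H).coeff n + 2 * H 3 (-2) * (sigma5 H 5).coeff n
        + (sigma5 H 6).coeff n := by
    intro n
    rw [← mul33_coeff]
    exact E3 (hmul _ m3 _ m3) n
  -- tail kill, first steps
  have x1 : H 3 1 = 0 := by
    have h := coeffm1 (hz2 _ m3)
    rw [zp_mul_coeff, show (-1+2 : ℤ) = ((1:ℕ):ℤ) by norm_num, coeff_three_nat] at h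
    exact_mod_cast h
  have xj1 : ∀ j, 5 ≤ j → H j 1 = 0 := by
    intro j hj
    have h := coeffm1 (hz2 _ (mj j hj))
    rw [zp_mul_coeff, show (-1+2 : ℤ) = ((1:ℕ):ℤ) by norm_num, coeff_sigma_nat hj] at h
    exact_mod_cast h
  have a1 : H 5 (-4) = H 3 (-2) := by
    have h := e1 (-4)
    rw [show (-4+2 : ℤ) = -2 by norm_num, coeff_three, coeff_sigma_neg4 (by norm_num : 5 ≤ 5)] at h
    norm_num at h
    exact h.symm
  have a2 : H 5 (-2) = H 3 0 := by
    have h := e1 (-2)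
    rw [show (-2+2 : ℤ) = 0 by norm_num, coeff_three, coeff_sigma_neg2 (by norm_num : 5 ≤ 5)] at h
    norm_num at h
    exact h.symm
  have a4 : ∀ k : ℕ, H 3 ((k:ℤ)+2) = H 5 (k:ℤ) := by
    intro k
    have h := e1 (k:ℤ)
    rw [coeff_sigma_nat (by norm_num), show ((k:ℤ)+2) = (((k+2:ℕ)):ℤ) by push_cast; ring,
      coeff_three_nat] at h
    push_cast at h ⊢
    exact h
  have x2 : H 3 2 = 0 := by
    have h := e3' (-1)
    rw [show (-1+3 : ℤ) = ((2:ℕ):ℤ) by norm_num, show (-1+2 : ℤ) = ((1:ℕ):ℤ) by norm_num,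
      Wcoeff_nat, Wcoeff_nat, WWcoeff_neg (by norm_num), coeff_three, coeff_sigma, coeff_sigma] at h
    norm_num [x1] at h
    exact h
  have h50 : H 5 0 = 0 := by
    have := a4 0
    norm_num [x2] at this
    exact this.symm
  have x3 : H 3 3 = 0 := by
    have h := a4 1
    norm_num [xj1 5 (by norm_num)] at h
    exact h
  have a6 : ∀ j, 5 ≤ j → H j (-2) = H (j+2) (-4) + H j (-4) * H 6 (-4) := by
    intro j hj
    have h := e2 j hj (-4)
    rw [show (-4+2 : ℤ) = -2 by norm_num, coeff_sigma_neg2 hj,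
      coeff_sigma_neg4 (by omega : 5 ≤ j+2), coeff_sigma_neg4 (by norm_num : 5 ≤ 6)] at h
    exact h
  have a7 : ∀ j, 5 ≤ j → H j 0 = H (j+2) (-2) + H j (-4) * H 6 (-2) := by
    intro j hj
    have h := e2 j hj (-2)
    rw [show (-2+2 : ℤ) = ((0:ℕ):ℤ) by norm_num, coeff_sigma_nat hj,
      coeff_sigma_neg2 (by omega : 5 ≤ j+2), coeff_sigma_neg2 (by norm_num : 5 ≤ 6)] at h
    exact_mod_cast h
  have a9 : ∀ j, 5 ≤ j → ∀ k : ℕ, H j ((k:ℤ)+2) = H (j+2) (k:ℤ) + H j (-4) * H 6 (k:ℤ) := by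
    intro j hj k
    have h := e2 j hj (k:ℤ)
    rw [coeff_sigma_nat (by omega : 5 ≤ j+2), coeff_sigma_nat (by norm_num : 5 ≤ 6),
      show ((k:ℤ)+2) = (((k+2:ℕ)):ℤ) by push_cast; ring, coeff_sigma_nat hj] at h
    push_cast at h ⊢
    exact h
  have a10 : H 6 (-4) = -(H 3 (-2))^2 := by
    have h := e3' (-4)
    rw [Wcoeff_neg (by norm_num), Wcoeff_neg (by norm_num), WWcoeff_neg (by norm_num),
      coeff_three, coeff_sigma_neg4 (by norm_num : 5 ≤ 5), coeff_sigma_neg4 (by norm_num : 5 ≤ 6)] at h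
    norm_num [a1] at h
    linear_combination -h
  have a11 : H 6 (-2) = -(2 * H 3 0 * H 3 (-2)) := by
    have h := e3' (-2)
    rw [show (-2+3 : ℤ) = ((1:ℕ):ℤ) by norm_num, show (-2+2 : ℤ) = ((0:ℕ):ℤ) by norm_num,
      Wcoeff_nat, Wcoeff_nat, WWcoeff_neg (by norm_num), coeff_three,
      coeff_sigma_neg2 (by norm_num : 5 ≤ 5), coeff_sigma_neg2 (by norm_num : 5 ≤ 6)] at h
    norm_num [x1, a2] at h
    linear_combination -h
  have a13 : H 6 0 = -(H 3 0)^2 := by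
    have h := e3' 0
    rw [show (0+3 : ℤ) = ((3:ℕ):ℤ) by norm_num, show (0+2 : ℤ) = ((2:ℕ):ℤ) by norm_num,
      Wcoeff_nat, Wcoeff_nat, show (0:ℤ) = ((0:ℕ):ℤ) by norm_num, WWcoeff_nat,
      coeff_three_nat, coeff_sigma_nat (by norm_num : 5 ≤ 5), coeff_sigma_nat (by norm_num : 5 ≤ 6)] at h
    norm_num [x2, x3, h50] at h
    linear_combination -h
  have a14 : ∀ k : ℕ, 2*(H 3 ((k:ℤ)+3)) + 2*(H 3 (-2))*(H 3 ((k:ℤ)+2))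
      + (∑ p ∈ Finset.HasAntidiagonal.antidiagonal k, H 3 (p.1:ℤ) * H 3 (p.2:ℤ))
      = 2 * H 3 0 * H 3 (k:ℤ) + 2 * H 3 (-2) * H 5 (k:ℤ) + H 6 (k:ℤ) := by
    intro k
    have h := e3' (k:ℤ)
    rw [show ((k:ℤ)+3) = (((k+3:ℕ)):ℤ) by push_cast; ring,
      show ((k:ℤ)+2) = (((k+2:ℕ)):ℤ) by push_cast; ring,
      Wcoeff_nat, Wcoeff_nat, WWcoeff_nat, coeff_three_nat,
      coeff_sigma_nat (by norm_num : 5 ≤ 5), coeff_sigma_nat (by norm_num : 5 ≤ 6)] at h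
    have h1 : ¬ ((k:ℤ) = -6) := by omega
    have h2 : ¬ ((k:ℤ) = -5) := by omega
    have h3 : ¬ ((k:ℤ) = -4) := by omega
    rw [if_neg h1, if_neg h2, if_neg h3] at h
    push_cast at h ⊢
    linear_combination h
  -- odd tails of all members vanish
  have odd1 : ∀ l : ℕ, ∀ j, 5 ≤ j → H j (2*(l:ℤ)+1) = 0 := by
    intro l
    induction l with
    | zero =>
      intro j hj
      simpa using xj1 j hj
    | succ l ih =>
      intro j hj
      have h := a9 j hj (2*l+1)
      push_cast at h
      rw [ih (j+2) (by omega), ih 6 (by norm_num)] at h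
      push_cast
      rw [show (2*((l:ℤ)+1)+1) = 2*(l:ℤ)+1+2 by ring]
      simpa using h
  have odd3 : ∀ l : ℕ, H 3 (2*(l:ℤ)+1) = 0 := by
    intro l
    cases l with
    | zero => simpa using x1
    | succ l =>
      have h := a4 (2*l+1)
      push_cast at h
      rw [odd1 l 5 (by norm_num)] at h
      push_cast
      rw [show (2*((l:ℤ)+1)+1) = 2*(l:ℤ)+1+2 by ring]
      exact h
  have even3 : ∀ l : ℕ, H 3 (2*(l:ℤ)+4) = 0 := by
    intro l
    have h := a14 (2*l+1)
    have hsum : (∑ p ∈ Finset.HasAntidiagonal.antidiagonal (2*l+1), H 3 (p.1:ℤ) * H 3 (p.2:ℤ)) = 0 := by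
      apply Finset.sum_eq_zero
      intro p hp
      rw [Finset.HasAntidiagonal.mem_antidiagonal] at hp
      rcases Nat.even_or_odd p.1 with he | ho
      · have hodd : Odd p.2 := by
          rcases he with ⟨m, hm⟩
          refine ⟨l - m, by omega⟩
        rcases hodd with ⟨m, hm⟩
        rw [show ((p.2:ℕ):ℤ) = 2*(m:ℤ)+1 by omega, odd3 m, mul_zero]
      · rcases ho with ⟨m, hm⟩
        rw [show ((p.1:ℕ):ℤ) = 2*(m:ℤ)+1 by omega, odd3 m, zero_mul]
    rw [hsum, show ((2*l+1:ℕ):ℤ)+3 = 2*(l:ℤ)+4 by push_cast; ring,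
      show ((2*l+1:ℕ):ℤ)+2 = 2*((l:ℤ)+1)+1 by push_cast; ring,
      show ((2*l+1:ℕ):ℤ) = 2*(l:ℤ)+1 by push_cast; ring] at h
    rw [show (2*((l:ℤ))+4 : ℤ) = 2*(l:ℤ)+4 by ring]
    have o1 := odd3 (l+1)
    have o2 := odd3 l
    have o3 := odd1 l 5 (by norm_num)
    have o4 := odd1 l 6 (by norm_num)
    push_cast at o1 o2 o3 o4 h ⊢
    linear_combination (h - 2*(H 3 (-2))*o1 + 2*(H 3 0)*o2 + 2*(H 3 (-2))*o3 + o4) / 2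
  have tail3 : ∀ k : ℕ, 1 ≤ k → H 3 (k:ℤ) = 0 := by
    intro k hk
    rcases Nat.even_or_odd k with he | ho
    · rcases he with ⟨m, hm⟩
      match m, hm with
      | 0, hm => omega
      | 1, hm => rw [show ((k:ℕ):ℤ) = 2 by omega]; exact x2
      | (m+2), hm =>
        rw [show ((k:ℕ):ℤ) = 2*(m:ℤ)+4 by omega]
        exact even3 m
    · rcases ho with ⟨m, hm⟩
      rw [show ((k:ℕ):ℤ) = 2*(m:ℤ)+1 by omega]
      exact odd3 m
  have tail5 : ∀ k : ℕ, 1 ≤ k → H 5 (k:ℤ) = 0 := by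
    intro k hk
    have h := a4 k
    rw [show ((k:ℤ)+2) = ((k+2:ℕ):ℤ) by push_cast; ring, tail3 (k+2) (by omega)] at h
    exact h.symm
  have tail6 : ∀ k : ℕ, 1 ≤ k → H 6 (k:ℤ) = 0 := by
    intro k hk
    have h := a14 k
    have hsum : (∑ p ∈ Finset.HasAntidiagonal.antidiagonal k, H 3 (p.1:ℤ) * H 3 (p.2:ℤ)) = 0 := by
      apply Finset.sum_eq_zero
      intro p hp
      rw [Finset.HasAntidiagonal.mem_antidiagonal] at hp
      rcases Nat.eq_zero_or_pos p.1 with h0 | h1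
      · rw [tail3 p.2 (by omega), mul_zero]
      · rw [tail3 p.1 (by omega), zero_mul]
    rw [hsum, show ((k:ℤ)+3) = ((k+3:ℕ):ℤ) by push_cast; ring,
      show ((k:ℤ)+2) = ((k+2:ℕ):ℤ) by push_cast; ring,
      tail3 (k+3) (by omega), tail3 (k+2) (by omega), tail3 k hk, tail5 k hk] at h
    linear_combination -h
  have tailall : ∀ j : ℕ, 5 ≤ j → ∀ k : ℕ, 1 ≤ k → H j (k:ℤ) = 0 := by
    intro j
    induction j using Nat.strong_induction_on with
    | _ j ih =>
      intro hj k hk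
      rcases (by omega : j = 5 ∨ j = 6 ∨ 7 ≤ j) with rfl | rfl | hj7
      · exact tail5 k hk
      · exact tail6 k hk
      · have hj2 : 5 ≤ j - 2 := by omega
        have h := a9 (j-2) hj2 k
        rw [show (j-2)+2 = j by omega] at h
        rw [show ((k:ℤ)+2) = ((k+2:ℕ):ℤ) by push_cast; ring] at h
        rw [ih (j-2) (by omega) hj2 (k+2) (by omega), tail6 k hk] at h
        linear_combination -h
  refine ⟨fun k hk => ⟨tail3 k hk, fun j hj => tailall j hj k hk⟩, ⟨a1, a2, h50⟩,
    ⟨a10, a11, a13⟩, fun j hj => ⟨?_, ?_, ?_⟩⟩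
  · linear_combination -(a6 j hj) - (H j (-4)) * a10
  · linear_combination -(a7 j hj) - (H j (-4)) * a11
  · have h := a9 j hj 0
    have h2 : H j 2 = 0 := by
      have := tailall j hj 2 (by norm_num)
      exact_mod_cast this
    norm_num [h2] at h
    linear_combination -h - (H j (-4)) * a13

end Sigma5Fwd

namespace Sigma5Rev
open Sigma5Aux Sigma5Aux2

lemma zp_mul (i j : ℤ) : zp i * zp j = zp (i + j) := by
  rw [zp, zp, zp, HahnSeries.single_mul_single, one_mul, neg_add]

lemma smul_eq_C_mul (c : ℂ) (x : LaurentSeries ℂ) : c • x = HahnSeries.single 0 c * x :=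
  HahnSeries.single_zero_mul_eq_smul.symm

lemma mul_smul_comm' (c : ℂ) (x y : LaurentSeries ℂ) : x * (c • y) = c • (x * y) := by
  rw [smul_eq_C_mul, smul_eq_C_mul]; ring

lemma smul_mul_assoc' (c : ℂ) (x y : LaurentSeries ℂ) : (c • x) * y = c • (x * y) := by
  rw [smul_eq_C_mul, smul_eq_C_mul]; ring

lemma smul_smul' (c d : ℂ) (x : LaurentSeries ℂ) : c • d • x = (c*d) • x := by
  rw [smul_eq_C_mul, smul_eq_C_mul, smul_eq_C_mul, ← mul_assoc,
    HahnSeries.single_mul_single, add_zero]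

variable {H : ℕ → ℤ → ℂ}

/-- With vanishing tails, `p₃` is a polynomial. -/
lemma p3_poly (ht : ∀ k : ℕ, 1 ≤ k → H 3 (k:ℤ) = 0) :
    sigma5three H = zp 3 + H 3 (-2) • zp 2 + H 3 0 • zp 0 := by
  rw [sigma5three]
  congr 1
  have : (PowerSeries.mk fun k : ℕ => H 3 (k:ℤ)) = PowerSeries.C (H 3 0) := by
    ext n
    rw [PowerSeries.coeff_mk, PowerSeries.coeff_C]
    rcases Nat.eq_zero_or_pos n with rfl | hn
    · simp
    · rw [ht n hn, if_neg (by omega)]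
  rw [this, HahnSeries.ofPowerSeries_C]
  rw [zp, smul_single, neg_zero, mul_one]
  rfl

/-- With vanishing tails, `p_j` is a polynomial. -/
lemma pj_poly {j : ℕ} (hj : 5 ≤ j) (ht : ∀ k : ℕ, 1 ≤ k → H j (k:ℤ) = 0) :
    sigma5 H j = zp j + H j (-4) • zp 4 + H j (-2) • zp 2 + H j 0 • zp 0 := by
  rw [sigma5]
  congr 1
  have : (PowerSeries.mk fun k : ℕ => H j (k:ℤ)) = PowerSeries.C (H j 0) := by
    ext n
    rw [PowerSeries.coeff_mk, PowerSeries.coeff_C]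
    rcases Nat.eq_zero_or_pos n with rfl | hn
    · simp
    · rw [ht n hn, if_neg (by omega)]
  rw [this, HahnSeries.ofPowerSeries_C]
  rw [zp, smul_single, neg_zero, mul_one]
  rfl

lemma zp_zero : zp 0 = 1 := by
  rw [zp, neg_zero, HahnSeries.single_zero_one]

lemma reverse {H : ℕ → ℤ → ℂ}
    (hc : (∀ k : ℕ, 1 ≤ k → H 3 (k:ℤ) = 0 ∧ ∀ j : ℕ, 5 ≤ j → H j (k:ℤ) = 0) ∧
     (H 5 (-4) = H 3 (-2) ∧ H 5 (-2) = H 3 0 ∧ H 5 0 = 0) ∧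
     (H 6 (-4) = -(H 3 (-2))^2 ∧ H 6 (-2) = -(2 * H 3 0 * H 3 (-2)) ∧
        H 6 0 = -(H 3 0)^2) ∧
     (∀ j : ℕ, 5 ≤ j →
        H (j+2) (-4) = H j (-2) + (H 3 (-2))^2 * H j (-4) ∧
        H (j+2) (-2) = H j 0 + 2 * H 3 0 * H 3 (-2) * H j (-4) ∧
        H (j+2) 0 = (H 3 0)^2 * H j (-4))) :
    ((∀ x ∈ sigma5Set H, ∀ y ∈ sigma5Set H, x * y ∈ Submodule.span ℂ (sigma5Set H)) ∧
     (∀ x ∈ sigma5Set H, zp 2 * x ∈ Submodule.span ℂ (sigma5Set H))) := by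
  obtain ⟨htails, h5, h6, hrec⟩ := hc
  have ht3 : ∀ k : ℕ, 1 ≤ k → H 3 (k:ℤ) = 0 := fun k hk => (htails k hk).1
  have htj : ∀ j, 5 ≤ j → ∀ k : ℕ, 1 ≤ k → H j (k:ℤ) = 0 :=
    fun j hj k hk => (htails k hk).2 j hj
  have m3 : sigma5three H ∈ Submodule.span ℂ (sigma5Set H) :=
    Submodule.subset_span (Set.mem_insert _ _)
  have mj : ∀ j, 5 ≤ j → sigma5 H j ∈ Submodule.span ℂ (sigma5Set H) :=
    fun j hj => Submodule.subset_span (Set.mem_insert_of_mem _ ⟨j, hj, rfl⟩)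
  have hq3 := p3_poly ht3
  have hqj : ∀ j, 5 ≤ j → sigma5 H j = zp j + H j (-4) • zp 4 + H j (-2) • zp 2 + H j 0 • zp 0 :=
    fun j hj => pj_poly hj (htj j hj)
  -- identity I1
  have I1 : zp 2 * sigma5three H = sigma5 H 5 := by
    rw [hq3, hqj 5 (by norm_num), h5.1, h5.2.1, h5.2.2]
    simp only [mul_add, mul_smul_comm', zp_mul]
    norm_num
    module
  -- identity I2
  have I2 : ∀ j, 5 ≤ j → zp 2 * sigma5 H j
      = sigma5 H (j+2) + H j (-4) • sigma5 H 6 := by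
    intro j hj
    rw [hqj j hj, hqj (j+2) (by omega), hqj 6 (by norm_num),
      (hrec j hj).1, (hrec j hj).2.1, (hrec j hj).2.2, h6.1, h6.2.1, h6.2.2]
    simp only [mul_add, mul_smul_comm', zp_mul]
    rw [show ((j+2:ℕ):ℤ) = 2 + (j:ℤ) by push_cast; ring]
    norm_num
    module
  -- identity I3
  have I3 : sigma5three H * sigma5three H
      = sigma5 H 6 + (2 * H 3 (-2)) • sigma5 H 5 + (2 * H 3 0) • sigma5three H := by
    rw [hq3, hqj 5 (by norm_num), hqj 6 (by norm_num),
      h5.1, h5.2.1, h5.2.2, h6.1, h6.2.1, h6.2.2]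
    simp only [mul_add, add_mul, mul_smul_comm', smul_mul_assoc', smul_smul', zp_mul]
    norm_num
    module
  -- closure under multiplication by zp 2
  have LZ : ∀ x ∈ Submodule.span ℂ (sigma5Set H), zp 2 * x ∈ Submodule.span ℂ (sigma5Set H) := by
    intro x hx
    induction hx using Submodule.span_induction with
    | mem y hy =>
      rcases hy with hy | ⟨i, hi, rfl⟩
      · subst hy
        rw [I1]
        exact mj 5 (by norm_num)
      · simp only [Set.mem_setOf_eq] at hi
        rw [I2 i hi]
        exact add_mem (mj (i+2) (by omega)) (Submodule.smul_mem _ _ (mj 6 (by norm_num)))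
    | zero => rw [mul_zero]; exact zero_mem _
    | add u v hu hv ihu ihv => rw [mul_add]; exact add_mem ihu ihv
    | smul c u hu ihu => rw [mul_smul_comm']; exact Submodule.smul_mem _ _ ihu
  have LZ4 : ∀ x ∈ Submodule.span ℂ (sigma5Set H), zp 4 * x ∈ Submodule.span ℂ (sigma5Set H) := by
    intro x hx
    rw [show (4:ℤ) = 2 + 2 by norm_num, ← zp_mul, mul_assoc]
    exact LZ _ (LZ _ hx)
  have LZ6 : ∀ x ∈ Submodule.span ℂ (sigma5Set H), zp 6 * x ∈ Submodule.span ℂ (sigma5Set H) := by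
    intro x hx
    rw [show (6:ℤ) = 2 + 4 by norm_num, ← zp_mul, mul_assoc]
    exact LZ _ (LZ4 _ hx)
  -- p6 multiplication preserves the span
  have L6 : ∀ x ∈ Submodule.span ℂ (sigma5Set H),
      sigma5 H 6 * x ∈ Submodule.span ℂ (sigma5Set H) := by
    intro x hx
    rw [hqj 6 (by norm_num), h6.1, h6.2.1, h6.2.2, add_mul, add_mul, add_mul,
      smul_mul_assoc', smul_mul_assoc', smul_mul_assoc', zp_zero, one_mul]
    exact add_mem (add_mem (add_mem (LZ6 x hx) (Submodule.smul_mem _ _ (LZ4 x hx)))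
      (Submodule.smul_mem _ _ (LZ x hx))) (Submodule.smul_mem _ _ hx)
  have I3mem : sigma5three H * sigma5three H ∈ Submodule.span ℂ (sigma5Set H) := by
    rw [I3]
    exact add_mem (add_mem (mj 6 (by norm_num)) (Submodule.smul_mem _ _ (mj 5 (by norm_num))))
      (Submodule.smul_mem _ _ m3)
  -- expressing p_j via p_{j-2}
  have pjstep : ∀ j, 5 ≤ j → 7 ≤ j →
      sigma5 H j = zp 2 * sigma5 H (j-2) - H (j-2) (-4) • sigma5 H 6 := by
    intro j _ hj7
    have e := I2 (j-2) (by omega)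
    rw [show j - 2 + 2 = j by omega] at e
    exact (eq_sub_of_add_eq e.symm)
  -- p3 * p_j ∈ span
  have mul3gen : ∀ j, 5 ≤ j → sigma5three H * sigma5 H j ∈ Submodule.span ℂ (sigma5Set H) := by
    intro j
    induction j using Nat.strong_induction_on with
    | _ j ih =>
      intro hj
      rcases (by omega : j = 5 ∨ j = 6 ∨ 7 ≤ j) with rfl | rfl | hj7
      · rw [← I1, mul_left_comm]
        exact LZ _ I3mem
      · rw [mul_comm]
        exact L6 _ m3
      · rw [pjstep j hj hj7, mul_sub, mul_smul_comm', mul_left_comm]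
        exact sub_mem (LZ _ (ih (j-2) (by omega) (by omega)))
          (Submodule.smul_mem _ _ (by rw [mul_comm]; exact L6 _ m3))
  -- p3 * y ∈ span for any y in span
  have mul3M : ∀ y ∈ Submodule.span ℂ (sigma5Set H),
      sigma5three H * y ∈ Submodule.span ℂ (sigma5Set H) := by
    intro y hy
    induction hy using Submodule.span_induction with
    | mem u hu =>
      rcases hu with hu | ⟨i, hi, rfl⟩
      · subst hu; exact I3mem
      · simp only [Set.mem_setOf_eq] at hi
        exact mul3gen i hi
    | zero => rw [mul_zero]; exact zero_mem _
    | add u v hu hv ihu ihv => rw [mul_add]; exact add_mem ihu ihv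
    | smul c u hu ihu => rw [mul_smul_comm']; exact Submodule.smul_mem _ _ ihu
  -- p_i * y ∈ span for any y in span
  have muljM : ∀ i, 5 ≤ i → ∀ y ∈ Submodule.span ℂ (sigma5Set H),
      sigma5 H i * y ∈ Submodule.span ℂ (sigma5Set H) := by
    intro i
    induction i using Nat.strong_induction_on with
    | _ i ih =>
      intro hi y hy
      rcases (by omega : i = 5 ∨ i = 6 ∨ 7 ≤ i) with rfl | rfl | hi7
      · rw [← I1, mul_assoc]
        exact LZ _ (mul3M y hy)
      · exact L6 y hy
      · rw [pjstep i hi hi7, sub_mul, smul_mul_assoc', mul_assoc]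
        exact sub_mem (LZ _ (ih (i-2) (by omega) (by omega) y hy))
          (Submodule.smul_mem _ _ (L6 y hy))
  constructor
  · intro x hx y hy
    have hyM : y ∈ Submodule.span ℂ (sigma5Set H) := Submodule.subset_span hy
    rcases hx with hx | ⟨i, hi, rfl⟩
    · subst hx; exact mul3M y hyM
    · simp only [Set.mem_setOf_eq] at hi
      exact muljM i hi y hyM
  · intro x hx
    exact LZ _ (Submodule.subset_span hx)

end Sigma5Rev


theorem sigma5_closed_iff (H : ℕ → ℤ → ℂ) :
    ((∀ x ∈ sigma5Set H, ∀ y ∈ sigma5Set H, x * y ∈ Submodule.span ℂ (sigma5Set H)) ∧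
     (∀ x ∈ sigma5Set H, zp 2 * x ∈ Submodule.span ℂ (sigma5Set H)))
    ↔
    ((∀ k : ℕ, 1 ≤ k → H 3 (k:ℤ) = 0 ∧ ∀ j : ℕ, 5 ≤ j → H j (k:ℤ) = 0) ∧
     (H 5 (-4) = H 3 (-2) ∧ H 5 (-2) = H 3 0 ∧ H 5 0 = 0) ∧
     (H 6 (-4) = -(H 3 (-2))^2 ∧ H 6 (-2) = -(2 * H 3 0 * H 3 (-2)) ∧
        H 6 0 = -(H 3 0)^2) ∧
     (∀ j : ℕ, 5 ≤ j →
        H (j+2) (-4) = H j (-2) + (H 3 (-2))^2 * H j (-4) ∧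
        H (j+2) (-2) = H j 0 + 2 * H 3 0 * H 3 (-2) * H j (-4) ∧
        H (j+2) 0 = (H 3 0)^2 * H j (-4))) := by
  constructor
  · rintro ⟨h1, h2⟩
    exact Sigma5Fwd.forward h1 h2
  · exact Sigma5Rev.reverse

end
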